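/- Let 𝔤 be a finite-dimensional real Lie algebra with symplectic structure Ω and positive compatible complex structure j, and let ξ : 𝔤 → ℝ be a nonzero linear map with ξ([u,v]) = 0 for all u, v ∈ 𝔤. On 𝔤' := 𝔤 × ℝ × ℝ define the bracket [(u,a,b),(v,a',b')]' := ([u,v], 0, ξ(v)a − ξ(u)a'), the form Ω'((u,a,b),(v,a',b')) := Ω(u,v) + ab' − ba', and j'(u,a,b) := (ju, −b, a). Then this bracket makes 𝔤' a Lie algebra, Ω' is a nondegenerate 2-cocycle, j' is a positive compatible complex structure, the span of the image of N^{j'} equals (span of the image of N^j) × ℝ × ℝ, and its Ω'-orthogonal complement equals ((span of the image of N^j)^⊥) × {0} × {0}. Moreover, if 𝔤 is nilpotent then 𝔤' is nilpotent. -/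

import Mathlib

/-- The algebraic Nijenhuis tensor of a linear map `j` on a Lie algebra. -/
def algNijenhuis {𝔤 : Type*} [LieRing 𝔤] [LieAlgebra ℝ 𝔤] (j : 𝔤 →ₗ[ℝ] 𝔤) (X Y : 𝔤) : 𝔤 :=
  ⁅j X, j Y⁆ - j ⁅j X, Y⁆ - j ⁅X, j Y⁆ - ⁅X, Y⁆

/-- The bracket `[(u,a,b),(v,a',b')]' = ([u,v], 0, ξ(v)a - ξ(u)a')` on `𝔤' = 𝔤 × ℝ × ℝ`. -/
def xiBracket {𝔤 : Type*} [LieRing 𝔤] [LieAlgebra ℝ 𝔤] (ξ : 𝔤 →ₗ[ℝ] ℝ)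
    (x y : 𝔤 × ℝ × ℝ) : 𝔤 × ℝ × ℝ :=
  (⁅x.1, y.1⁆, 0, ξ y.1 * x.2.1 - ξ x.1 * y.2.1)

/-- The symplectic form `Ω' = Ω ⊕ Ω_std` on `𝔤' = 𝔤 × ℝ × ℝ`. -/
def xiForm {𝔤 : Type*} [AddCommGroup 𝔤] [Module ℝ 𝔤] (Ω : 𝔤 →ₗ[ℝ] 𝔤 →ₗ[ℝ] ℝ)
    (x y : 𝔤 × ℝ × ℝ) : ℝ :=
  Ω x.1 y.1 + (x.2.1 * y.2.2 - x.2.2 * y.2.1)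

/-- The complex structure `j' = j ⊕ j_std` on `𝔤' = 𝔤 × ℝ × ℝ`, `j' c = d`. -/
def xiJ {𝔤 : Type*} [AddCommGroup 𝔤] [Module ℝ 𝔤] (j : 𝔤 →ₗ[ℝ] 𝔤)
    (x : 𝔤 × ℝ × ℝ) : 𝔤 × ℝ × ℝ :=
  (j x.1, -x.2.2, x.2.1)

/-- The Nijenhuis tensor of `j'` on `𝔤'` with the bracket `xiBracket ξ`. -/
def xiNijenhuis {𝔤 : Type*} [LieRing 𝔤] [LieAlgebra ℝ 𝔤] (ξ : 𝔤 →ₗ[ℝ] ℝ)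
    (j : 𝔤 →ₗ[ℝ] 𝔤) (x y : 𝔤 × ℝ × ℝ) : 𝔤 × ℝ × ℝ :=
  xiBracket ξ (xiJ j x) (xiJ j y) - xiJ j (xiBracket ξ (xiJ j x) y)
    - xiJ j (xiBracket ξ x (xiJ j y)) - xiBracket ξ x y

/-- Lower central series of a (bilinear) bracket on a real module. -/
def lcsOf {V : Type*} [AddCommGroup V] [Module ℝ V] (br : V → V → V) : ℕ → Submodule ℝ V
  | 0 => ⊤
  | (k + 1) => Submodule.span ℝ {w : V | ∃ x y, y ∈ lcsOf br k ∧ w = br x y}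

/-- A bracket is nilpotent if its lower central series reaches `⊥`. -/
def IsNilpotentBr {V : Type*} [AddCommGroup V] [Module ℝ V] (br : V → V → V) : Prop :=
  ∃ N : ℕ, lcsOf br N = ⊥

/-- Closed form of `xiNijenhuis`. -/
lemma xiNijenhuis_eval {𝔤 : Type*} [LieRing 𝔤] [LieAlgebra ℝ 𝔤] (ξ : 𝔤 →ₗ[ℝ] ℝ)
    (j : 𝔤 →ₗ[ℝ] 𝔤) (x y : 𝔤 × ℝ × ℝ) :
    xiNijenhuis ξ j x y = (algNijenhuis j x.1 y.1,
      -(ξ y.1) * x.2.2 - ξ (j x.1) * y.2.1 + ξ (j y.1) * x.2.1 + ξ x.1 * y.2.2,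
      -(ξ (j y.1)) * x.2.2 + ξ (j x.1) * y.2.2 - ξ y.1 * x.2.1 + ξ x.1 * y.2.1) := by
  simp only [xiNijenhuis, xiBracket, xiJ, algNijenhuis, Prod.mk_sub_mk, Prod.ext_iff]
  exact ⟨trivial, by ring, by ring⟩

lemma lcsOf_antitone_succ {V : Type*} [AddCommGroup V] [Module ℝ V] (br : V → V → V) :
    ∀ k, lcsOf br (k + 1) ≤ lcsOf br k := by
  intro k
  induction k with
  | zero => exact le_top
  | succ k ih =>
    show lcsOf br (k + 2) ≤ lcsOf br (k + 1)
    refine Submodule.span_le.2 ?_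
    rintro w ⟨x, y, hy, rfl⟩
    exact Submodule.subset_span ⟨x, y, ih hy, rfl⟩

/-- second construction, enlarging the image of the Nijenhuis tensor.
Given a symplectic Lie algebra `(𝔤, Ω)` with positive compatible `j` and a nonzero
character `ξ`, the bracket `xiBracket ξ` makes `𝔤' = 𝔤 × ℝ × ℝ` a Lie algebra, `Ω'` is a
nondegenerate 2-cocycle, `j'` is a positive compatible complex structure,
`Im N^{j'} = (Im N^j) × ℝ × ℝ`, its `Ω'`-orthogonal complement is `(Im N^j)ᗮ × {0} × {0}`,
and nilpotency of `𝔤` implies nilpotency of `𝔤'`. -/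
theorem stmt_14 (𝔤 : Type*) [LieRing 𝔤] [LieAlgebra ℝ 𝔤] [Module.Finite ℝ 𝔤]
    (Ω : 𝔤 →ₗ[ℝ] 𝔤 →ₗ[ℝ] ℝ)
    (hΩalt : ∀ X : 𝔤, Ω X X = 0)
    (hΩnondeg : ∀ X : 𝔤, (∀ Y : 𝔤, Ω X Y = 0) → X = 0)
    (hcocycle : ∀ X Y Z : 𝔤, Ω ⁅X, Y⁆ Z + Ω ⁅Y, Z⁆ X + Ω ⁅Z, X⁆ Y = 0)
    (j : 𝔤 →ₗ[ℝ] 𝔤)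
    (hj2 : ∀ X : 𝔤, j (j X) = -X)
    (hcompat : ∀ X Y : 𝔤, Ω (j X) (j Y) = Ω X Y)
    (hpos : ∀ X : 𝔤, X ≠ 0 → 0 < Ω X (j X))
    (ξ : 𝔤 →ₗ[ℝ] ℝ) (hξ0 : ξ ≠ 0) (hξchar : ∀ u v : 𝔤, ξ ⁅u, v⁆ = 0) :
    -- the bracket is bilinear, alternating and satisfies the Jacobi identity
    (∀ x y z : 𝔤 × ℝ × ℝ, xiBracket ξ (x + y) z = xiBracket ξ x z + xiBracket ξ y z) ∧
    (∀ (c : ℝ) (x y : 𝔤 × ℝ × ℝ), xiBracket ξ (c • x) y = c • xiBracket ξ x y) ∧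
    (∀ x y z : 𝔤 × ℝ × ℝ, xiBracket ξ x (y + z) = xiBracket ξ x y + xiBracket ξ x z) ∧
    (∀ (c : ℝ) (x y : 𝔤 × ℝ × ℝ), xiBracket ξ x (c • y) = c • xiBracket ξ x y) ∧
    (∀ x : 𝔤 × ℝ × ℝ, xiBracket ξ x x = 0) ∧
    (∀ x y z : 𝔤 × ℝ × ℝ,
      xiBracket ξ x (xiBracket ξ y z) + xiBracket ξ y (xiBracket ξ z x) +
        xiBracket ξ z (xiBracket ξ x y) = 0) ∧
    -- Ω' is a nondegenerate 2-cocycle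
    (∀ x : 𝔤 × ℝ × ℝ, xiForm Ω x x = 0) ∧
    (∀ x : 𝔤 × ℝ × ℝ, (∀ y, xiForm Ω x y = 0) → x = 0) ∧
    (∀ x y z : 𝔤 × ℝ × ℝ,
      xiForm Ω (xiBracket ξ x y) z + xiForm Ω (xiBracket ξ y z) x +
        xiForm Ω (xiBracket ξ z x) y = 0) ∧
    -- j' is a positive compatible complex structure
    (∀ x : 𝔤 × ℝ × ℝ, xiJ j (xiJ j x) = -x) ∧
    (∀ x y : 𝔤 × ℝ × ℝ, xiForm Ω (xiJ j x) (xiJ j y) = xiForm Ω x y) ∧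
    (∀ x : 𝔤 × ℝ × ℝ, x ≠ 0 → 0 < xiForm Ω x (xiJ j x)) ∧
    -- the image of the Nijenhuis tensor
    Submodule.span ℝ {w : 𝔤 × ℝ × ℝ | ∃ x y, w = xiNijenhuis ξ j x y} =
      (Submodule.span ℝ {v : 𝔤 | ∃ X Y : 𝔤, v = algNijenhuis j X Y}).prod
        ((⊤ : Submodule ℝ ℝ).prod (⊤ : Submodule ℝ ℝ)) ∧
    -- its orthogonal complement
    {x : 𝔤 × ℝ × ℝ |
        ∀ w ∈ Submodule.span ℝ {w : 𝔤 × ℝ × ℝ | ∃ x y, w = xiNijenhuis ξ j x y},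
          xiForm Ω w x = 0} =
      {x : 𝔤 × ℝ × ℝ |
        (∀ v ∈ Submodule.span ℝ {v : 𝔤 | ∃ X Y : 𝔤, v = algNijenhuis j X Y}, Ω v x.1 = 0) ∧
        x.2 = 0} ∧
    -- nilpotency is preserved
    (IsNilpotentBr (fun u v : 𝔤 => ⁅u, v⁆) → IsNilpotentBr (xiBracket ξ)) := by
  -- notation
  set S : Set 𝔤 := {v : 𝔤 | ∃ X Y : 𝔤, v = algNijenhuis j X Y} with hS
  set S' : Set (𝔤 × ℝ × ℝ) := {w : 𝔤 × ℝ × ℝ | ∃ x y, w = xiNijenhuis ξ j x y} with hS'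
  -- the span equality (part 4), proved first since part 5 uses it
  have hspan : Submodule.span ℝ S' =
      (Submodule.span ℝ S).prod ((⊤ : Submodule ℝ ℝ).prod (⊤ : Submodule ℝ ℝ)) := by
    -- a vector u with ξ u = 1
    obtain ⟨u0, hu0⟩ : ∃ u0, ξ u0 ≠ 0 := by
      by_contra h
      push_neg at h
      exact hξ0 (LinearMap.ext fun v => by simpa using h v)
    set u : 𝔤 := (ξ u0)⁻¹ • u0 with hu
    have hξu : ξ u = 1 := by
      simp [hu, inv_mul_cancel₀ hu0]
    set t : ℝ := ξ (j u) with ht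
    have hd : t ^ 2 + 1 ≠ 0 := by positivity
    -- the two special generators
    have he1 : ((0, t, -1) : 𝔤 × ℝ × ℝ) ∈ Submodule.span ℝ S' := by
      refine Submodule.subset_span ⟨(0, 1, 0), (u, 0, 0), ?_⟩
      rw [xiNijenhuis_eval]
      simp [algNijenhuis, hξu, ht]
    have he2 : ((0, -1, -t) : 𝔤 × ℝ × ℝ) ∈ Submodule.span ℝ S' := by
      refine Submodule.subset_span ⟨(0, 0, 1), (u, 0, 0), ?_⟩
      rw [xiNijenhuis_eval]
      simp [algNijenhuis, hξu, ht]
    have hea : ((0, 1, 0) : 𝔤 × ℝ × ℝ) ∈ Submodule.span ℝ S' := by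
      have : ((0, 1, 0) : 𝔤 × ℝ × ℝ) =
          (t / (t ^ 2 + 1)) • ((0, t, -1) : 𝔤 × ℝ × ℝ) +
            (-1 / (t ^ 2 + 1)) • ((0, -1, -t) : 𝔤 × ℝ × ℝ) := by
        refine Prod.ext (by simp) (Prod.ext ?_ ?_) <;>
          · simp only [Prod.smul_fst, Prod.smul_snd, Prod.fst_add, Prod.snd_add,
              smul_eq_mul]
            field_simp
            try ring
      rw [this]
      exact Submodule.add_mem _ (Submodule.smul_mem _ _ he1) (Submodule.smul_mem _ _ he2)
    have heb : ((0, 0, 1) : 𝔤 × ℝ × ℝ) ∈ Submodule.span ℝ S' := by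
      have : ((0, 0, 1) : 𝔤 × ℝ × ℝ) =
          (-1 / (t ^ 2 + 1)) • ((0, t, -1) : 𝔤 × ℝ × ℝ) +
            (-t / (t ^ 2 + 1)) • ((0, -1, -t) : 𝔤 × ℝ × ℝ) := by
        refine Prod.ext (by simp) (Prod.ext ?_ ?_) <;>
          · simp only [Prod.smul_fst, Prod.smul_snd, Prod.fst_add, Prod.snd_add,
              smul_eq_mul]
            field_simp
            try ring
      rw [this]
      exact Submodule.add_mem _ (Submodule.smul_mem _ _ he1) (Submodule.smul_mem _ _ he2)
    apply le_antisymm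
    · refine Submodule.span_le.2 ?_
      rintro w ⟨x, y, rfl⟩
      rw [xiNijenhuis_eval]
      exact ⟨Submodule.subset_span ⟨x.1, y.1, rfl⟩, trivial, trivial⟩
    · rintro ⟨v, a, b⟩ ⟨hv, -, -⟩
      have hv' : ((v, 0, 0) : 𝔤 × ℝ × ℝ) ∈ Submodule.span ℝ S' := by
        have hmap : Submodule.map (LinearMap.inl ℝ 𝔤 (ℝ × ℝ)) (Submodule.span ℝ S) ≤
            Submodule.span ℝ S' := by
          rw [Submodule.map_span, Submodule.span_le]
          rintro w ⟨v', ⟨X, Y, rfl⟩, rfl⟩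
          refine Submodule.subset_span ⟨(X, 0, 0), (Y, 0, 0), ?_⟩
          rw [xiNijenhuis_eval]
          simp
          rfl
        exact hmap ⟨v, hv, rfl⟩
      have : ((v, a, b) : 𝔤 × ℝ × ℝ) =
          (v, 0, 0) + a • ((0, 1, 0) : 𝔤 × ℝ × ℝ) + b • ((0, 0, 1) : 𝔤 × ℝ × ℝ) := by
        simp
      rw [this]
      exact Submodule.add_mem _ (Submodule.add_mem _ hv'
        (Submodule.smul_mem _ _ hea)) (Submodule.smul_mem _ _ heb)
  refine ⟨?_, ?_, ?_, ?_, ?_, ?_, ?_, ?_, ?_, ?_, ?_, ?_, hspan, ?_, ?_⟩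
  · -- additivity left
    intro x y z
    simp only [xiBracket, Prod.fst_add, Prod.snd_add, add_lie, map_add, Prod.mk_add_mk,
      Prod.ext_iff]
    exact ⟨trivial, by ring, by ring⟩
  · -- smul left
    intro c x y
    simp only [xiBracket, Prod.smul_fst, Prod.smul_snd, smul_lie, map_smul, smul_eq_mul,
      Prod.smul_mk, Prod.ext_iff]
    exact ⟨trivial, by ring, by ring⟩
  · -- additivity right
    intro x y z
    simp only [xiBracket, Prod.fst_add, Prod.snd_add, lie_add, map_add, Prod.mk_add_mk,
      Prod.ext_iff]
    exact ⟨trivial, by ring, by ring⟩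
  · -- smul right
    intro c x y
    simp only [xiBracket, Prod.smul_fst, Prod.smul_snd, lie_smul, map_smul, smul_eq_mul,
      Prod.smul_mk, Prod.ext_iff]
    exact ⟨trivial, by ring, by ring⟩
  · -- alternating
    intro x
    simp only [xiBracket, lie_self, Prod.mk_eq_zero]
    exact ⟨trivial, trivial, by ring⟩
  · -- Jacobi
    intro x y z
    simp only [xiBracket, hξchar, Prod.mk_add_mk, Prod.mk_eq_zero]
    refine ⟨lie_jacobi x.1 y.1 z.1, by ring, by ring⟩
  · -- Ω' alternating
    intro x
    simp only [xiForm, hΩalt]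
    ring
  · -- Ω' nondegenerate
    intro x hx
    have h1 : x.1 = 0 := by
      refine hΩnondeg _ fun Y => ?_
      have := hx (Y, 0, 0)
      simpa [xiForm] using this
    have h2 : x.2.1 = 0 := by
      have := hx (0, 0, 1)
      simpa [xiForm] using this
    have h3 : x.2.2 = 0 := by
      have := hx (0, 1, 0)
      simpa [xiForm] using this
    exact Prod.ext h1 (Prod.ext h2 h3)
  · -- Ω' cocycle
    intro x y z
    have := hcocycle x.1 y.1 z.1
    simp only [xiForm, xiBracket]
    nlinarith [this]
  · -- j'² = -1
    intro x
    simp [xiJ, hj2, Prod.ext_iff]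
  · -- compatibility
    intro x y
    simp only [xiForm, xiJ, hcompat]
    ring
  · -- positivity
    intro x hx
    simp only [xiForm, xiJ]
    rcases eq_or_ne x.1 0 with h1 | h1
    · have h2 : x.2.1 ≠ 0 ∨ x.2.2 ≠ 0 := by
        by_contra h
        push_neg at h
        exact hx (Prod.ext h1 (Prod.ext h.1 h.2))
      have hΩ0 : Ω x.1 (j x.1) = 0 := by rw [h1]; simp
      rcases h2 with h2 | h2
      · nlinarith [mul_self_pos.2 h2, mul_self_nonneg x.2.2]
      · nlinarith [mul_self_pos.2 h2, mul_self_nonneg x.2.1]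
    · nlinarith [hpos x.1 h1, mul_self_nonneg x.2.1, mul_self_nonneg x.2.2]
  · -- orthogonal complement
    ext x
    simp only [Set.mem_setOf_eq]
    constructor
    · intro h
      have ha : x.2.2 = 0 := by
        have := h (0, 1, 0) (by rw [hspan]; exact ⟨Submodule.zero_mem _, trivial, trivial⟩)
        simpa [xiForm] using this
      have hb : x.2.1 = 0 := by
        have := h (0, 0, 1) (by rw [hspan]; exact ⟨Submodule.zero_mem _, trivial, trivial⟩)
        have h' : -x.2.1 = 0 := by simpa [xiForm] using this
        linarith
      refine ⟨fun v hv => ?_, Prod.ext hb ha⟩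
      have := h (v, 0, 0) (by rw [hspan]; exact ⟨hv, trivial, trivial⟩)
      simpa [xiForm] using this
    · rintro ⟨h1, h2⟩ w hw
      rw [hspan] at hw
      obtain ⟨hw1, -, -⟩ := hw
      have hb : x.2.1 = 0 := by rw [h2]; rfl
      have ha : x.2.2 = 0 := by rw [h2]; rfl
      simp only [xiForm, hb, ha, mul_zero, sub_zero, zero_mul]
      simpa using h1 w.1 hw1
  · -- nilpotency
    rintro ⟨N, hN⟩
    set br : 𝔤 → 𝔤 → 𝔤 := fun u v => ⁅u, v⁆ with hbr
    -- lcs of 𝔤 from stage 1 on lies in ker ξ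
    have hker : ∀ k, lcsOf br (k + 1) ≤ LinearMap.ker ξ := by
      intro k
      refine Submodule.span_le.2 ?_
      rintro w ⟨x, y, -, rfl⟩
      exact hξchar x y
    -- step 1 bound
    have h1 : lcsOf (xiBracket ξ) 1 ≤
        (lcsOf br 1 ⊓ LinearMap.ker ξ).prod
          ((⊥ : Submodule ℝ ℝ).prod (⊤ : Submodule ℝ ℝ)) := by
      refine Submodule.span_le.2 ?_
      rintro w ⟨x, y, -, rfl⟩
      refine ⟨⟨Submodule.subset_span ⟨x.1, y.1, trivial, rfl⟩, hξchar x.1 y.1⟩, rfl, trivial⟩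
    -- higher bounds
    have h2 : ∀ k, lcsOf (xiBracket ξ) (k + 2) ≤
        (lcsOf br (k + 2)).prod (⊥ : Submodule ℝ (ℝ × ℝ)) := by
      intro k
      induction k with
      | zero =>
        refine Submodule.span_le.2 ?_
        rintro w ⟨x, y, hy, rfl⟩
        obtain ⟨⟨hy1, hyk⟩, hy21, -⟩ := h1 hy
        have hξy : ξ y.1 = 0 := hyk
        have hy21' : y.2.1 = 0 := hy21
        refine ⟨Submodule.subset_span ⟨x.1, y.1, hy1, rfl⟩, ?_⟩
        show ((0 : ℝ), ξ y.1 * x.2.1 - ξ x.1 * y.2.1) ∈ (⊥ : Submodule ℝ (ℝ × ℝ))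
        simp [hξy, hy21']
      | succ k ih =>
        refine Submodule.span_le.2 ?_
        rintro w ⟨x, y, hy, rfl⟩
        obtain ⟨hy1, hy2⟩ := ih hy
        have hξy : ξ y.1 = 0 := hker (k + 1) hy1
        have hy21 : y.2.1 = 0 := by
          have : y.2 = 0 := hy2
          rw [this]; rfl
        refine ⟨Submodule.subset_span ⟨x.1, y.1, hy1, rfl⟩, ?_⟩
        show ((0 : ℝ), ξ y.1 * x.2.1 - ξ x.1 * y.2.1) ∈ (⊥ : Submodule ℝ (ℝ × ℝ))
        simp [hξy, hy21]
    refine ⟨N + 2, le_bot_iff.1 ?_⟩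
    have hmono : lcsOf br (N + 2) ≤ lcsOf br N :=
      le_trans (lcsOf_antitone_succ br (N + 1)) (lcsOf_antitone_succ br N)
    calc lcsOf (xiBracket ξ) (N + 2)
        ≤ (lcsOf br (N + 2)).prod (⊥ : Submodule ℝ (ℝ × ℝ)) := h2 N
      _ ≤ (⊥ : Submodule ℝ 𝔤).prod (⊥ : Submodule ℝ (ℝ × ℝ)) := by
          exact Submodule.prod_mono (hN ▸ hmono) le_rfl
      _ = ⊥ := by simp [Submodule.prod_bot]
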